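/- Let I ⊆ P be an ideal with GFan number 1, and let O(I) denote the set of exponent vectors t such that the monomial X^t does not lie in LT_σ(I) (this set is independent of the monomial order σ by hypothesis). If O is any order ideal of exponent vectors such that the residue classes of the monomials X^t, t ∈ O, form a K-vector-space basis of P/I, then O = O(I). -/

import Mathlib

open MvPolynomial

/-- The leading monomial (σ-largest exponent vector in the support) of a polynomial. -/
noncomputable def leadMonomial {n : ℕ} {K : Type*} [Field K]
    (m : MonomialOrder (Fin n)) (f : MvPolynomial (Fin n) K) : Fin n →₀ ℕ :=
  m.toSyn.symm (f.support.sup fun s => m.toSyn s)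

/-- The leading term ideal of an ideal. -/
noncomputable def leadTermIdeal {n : ℕ} {K : Type*} [Field K]
    (m : MonomialOrder (Fin n)) (I : Ideal (MvPolynomial (Fin n) K)) :
    Ideal (MvPolynomial (Fin n) K) :=
  Ideal.span {g | ∃ f ∈ I, f ≠ 0 ∧ g = monomial (leadMonomial m f) (1 : K)}

set_option linter.dupNamespace false

namespace GFanAux

variable {n : ℕ} {K : Type*} [Field K]

/-! ### Basic properties of `leadMonomial` -/

lemma leadMonomial_mem_support (m : MonomialOrder (Fin n)) {f : MvPolynomial (Fin n) K}
    (hf : f ≠ 0) : leadMonomial m f ∈ f.support := by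
  obtain ⟨b, hb, he⟩ := Finset.exists_mem_eq_sup f.support
    (Finset.nonempty_iff_ne_empty.mpr (fun h => hf (support_eq_empty.mp h)))
    (fun s => m.toSyn s)
  rw [leadMonomial, he, AddEquiv.symm_apply_apply]
  exact hb

lemma le_leadMonomial (m : MonomialOrder (Fin n)) {f : MvPolynomial (Fin n) K}
    {w : Fin n →₀ ℕ} (hw : w ∈ f.support) :
    m.toSyn w ≤ m.toSyn (leadMonomial m f) := by
  rw [leadMonomial, AddEquiv.apply_symm_apply]
  exact Finset.le_sup hw

lemma monomial_mem_leadTermIdeal_iff (m : MonomialOrder (Fin n))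
    (I : Ideal (MvPolynomial (Fin n) K)) {v : Fin n →₀ ℕ} :
    monomial v (1 : K) ∈ leadTermIdeal m I ↔
      ∃ f ∈ I, f ≠ 0 ∧ leadMonomial m f ≤ v := by
  have hset : {g | ∃ f ∈ I, f ≠ 0 ∧ g = monomial (leadMonomial m f) (1 : K)}
      = (fun s => monomial s (1 : K)) '' {s | ∃ f ∈ I, f ≠ 0 ∧ leadMonomial m f = s} := by
    ext g
    constructor
    · rintro ⟨f, hfI, hf, rfl⟩
      exact ⟨leadMonomial m f, ⟨f, hfI, hf, rfl⟩, rfl⟩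
    · rintro ⟨s, ⟨f, hfI, hf, rfl⟩, rfl⟩
      exact ⟨f, hfI, hf, rfl⟩
  have hsm : (monomial v (1 : K)).support = {v} := by
    classical rw [support_monomial, if_neg one_ne_zero]
  rw [leadTermIdeal, hset, mem_ideal_span_monomial_image, hsm]
  constructor
  · intro h
    obtain ⟨s, ⟨f, hfI, hf, rfl⟩, hle⟩ := h v (Finset.mem_singleton_self v)
    exact ⟨f, hfI, hf, hle⟩
  · rintro ⟨f, hfI, hf, hle⟩ xi hxi
    rw [Finset.mem_singleton] at hxi
    exact ⟨leadMonomial m f, ⟨f, hfI, hf, rfl⟩, hxi ▸ hle⟩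

lemma eq_zero_of_support_std (m : MonomialOrder (Fin n))
    (I : Ideal (MvPolynomial (Fin n) K)) {f : MvPolynomial (Fin n) K} (hfI : f ∈ I)
    (hsupp : ∀ v ∈ f.support, monomial v (1 : K) ∉ leadTermIdeal m I) : f = 0 := by
  by_contra hf
  exact hsupp _ (leadMonomial_mem_support m hf) (Ideal.subset_span ⟨f, hfI, hf, rfl⟩)

/-! ### Changing universes / comparing monomial orders -/

lemma leadMonomial_congr (m₁ : MonomialOrder.{0, u} (Fin n)) (m₂ : MonomialOrder.{0, v} (Fin n))
    (h : ∀ a b : Fin n →₀ ℕ, m₁.toSyn a ≤ m₁.toSyn b ↔ m₂.toSyn a ≤ m₂.toSyn b)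
    (f : MvPolynomial (Fin n) K) : leadMonomial m₁ f = leadMonomial m₂ f := by
  rcases eq_or_ne f 0 with rfl | hf
  · simp only [leadMonomial, support_zero, Finset.sup_empty]
    rw [show (⊥ : m₁.syn) = 0 from rfl, show (⊥ : m₂.syn) = 0 from rfl,
      map_zero, map_zero]
  · have h1 : m₂.toSyn (leadMonomial m₁ f) ≤ m₂.toSyn (leadMonomial m₂ f) :=
      le_leadMonomial m₂ (leadMonomial_mem_support m₁ hf)
    have h2 : m₂.toSyn (leadMonomial m₂ f) ≤ m₂.toSyn (leadMonomial m₁ f) :=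
      (h _ _).mp (le_leadMonomial m₁ (leadMonomial_mem_support m₂ hf))
    exact m₂.toSyn.injective (le_antisymm h1 h2)

lemma leadTermIdeal_congr (m₁ : MonomialOrder.{0, u} (Fin n)) (m₂ : MonomialOrder.{0, v} (Fin n))
    (h : ∀ a b : Fin n →₀ ℕ, m₁.toSyn a ≤ m₁.toSyn b ↔ m₂.toSyn a ≤ m₂.toSyn b)
    (I : Ideal (MvPolynomial (Fin n) K)) : leadTermIdeal m₁ I = leadTermIdeal m₂ I := by
  unfold leadTermIdeal
  congr 1
  ext g
  constructor
  · rintro ⟨f, hfI, hf, rfl⟩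
    exact ⟨f, hfI, hf, by rw [leadMonomial_congr m₁ m₂ h]⟩
  · rintro ⟨f, hfI, hf, rfl⟩
    exact ⟨f, hfI, hf, by rw [leadMonomial_congr m₁ m₂ h]⟩

/-- Universe-adjusting wrapper around exponent vectors. -/
structure PWrap (n : ℕ) : Type v where
  /-- the underlying exponent vector -/
  val : Fin n →₀ ℕ

lemma PWrap.ext' {x y : PWrap.{v} n} (h : x.val = y.val) : x = y := by
  cases x; cases y; cases h; rfl

/-- Transport a monomial order to an arbitrary universe. -/
noncomputable def reuniv (m : MonomialOrder.{0, u} (Fin n)) :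
    MonomialOrder.{0, v} (Fin n) :=
  letI zer : Zero (PWrap.{v} n) := ⟨⟨0⟩⟩
  letI adder : Add (PWrap.{v} n) := ⟨fun x y => ⟨x.val + y.val⟩⟩
  letI amon : AddCommMonoid (PWrap.{v} n) :=
  { zer, adder with
    add_assoc := fun a b c => PWrap.ext' (add_assoc _ _ _)
    zero_add := fun a => PWrap.ext' (zero_add _)
    add_zero := fun a => PWrap.ext' (add_zero _)
    add_comm := fun a b => PWrap.ext' (add_comm _ _)
    nsmul := nsmulRec }
  letI lo : LinearOrder (PWrap.{v} n) :=
    LinearOrder.lift' (fun x => m.toSyn x.val)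
      (fun x y h => PWrap.ext' (m.toSyn.injective h))
  letI locacm : IsOrderedCancelAddMonoid (PWrap.{v} n) :=
    { add_le_add_left := fun a b h c => by
        show m.toSyn (a.val + c.val) ≤ m.toSyn (b.val + c.val)
        rw [map_add, map_add]
        have h0 : m.toSyn a.val ≤ m.toSyn b.val := h
        exact _root_.add_le_add (α := m.syn) h0 le_rfl
      le_of_add_le_add_left := fun a b c h => by
        show m.toSyn b.val ≤ m.toSyn c.val
        have h' : m.toSyn a.val + m.toSyn b.val ≤ m.toSyn a.val + m.toSyn c.val := by
          rw [← map_add, ← map_add]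
          exact h
        exact le_of_add_le_add_left h' }
  { syn := PWrap.{v} n
    isOrderedAddMonoid_syn := locacm.toIsOrderedAddMonoid
    toSyn :=
    { toFun := fun a => ⟨a⟩
      invFun := fun x => x.val
      left_inv := fun a => rfl
      right_inv := fun x => rfl
      map_add' := fun a b => rfl }
    toSyn_monotone := fun a b h => (m.toSyn_monotone h : m.toSyn _ ≤ m.toSyn _)
    wellFoundedLT_syn := by
      constructor
      exact Subrelation.wf
        (fun {a b} h => (h : InvImage (· < ·) (fun x : PWrap.{v} n => m.toSyn x.val) a b))
        (InvImage.wf (fun x : PWrap.{v} n => m.toSyn x.val) (wellFounded_lt (α := m.syn))) }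

lemma reuniv_le_iff (m : MonomialOrder.{0, u} (Fin n)) (a b : Fin n →₀ ℕ) :
    (reuniv.{u, v} m).toSyn a ≤ (reuniv m).toSyn b ↔ m.toSyn a ≤ m.toSyn b :=
  ⟨fun h => h, fun h => h⟩

lemma leadTermIdeal_reuniv (m : MonomialOrder.{0, u} (Fin n))
    (I : Ideal (MvPolynomial (Fin n) K)) :
    leadTermIdeal (reuniv.{u, v} m) I = leadTermIdeal m I :=
  leadTermIdeal_congr (reuniv.{u, v} m) m (fun a b => reuniv_le_iff.{u, v} m a b) I

/-! ### A monomial order making a given incomparable pair comparable -/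

/-- The lexicographic monomial order with variables permuted by `e`. -/
noncomputable def permOrder {n : ℕ} (e : Fin n ≃ Fin n) : MonomialOrder.{0, 0} (Fin n) where
  syn := (MonomialOrder.lex : MonomialOrder (Fin n)).syn
  toSyn := (Finsupp.domCongr e).trans MonomialOrder.lex.toSyn
  toSyn_monotone := by
    intro a b hab
    exact MonomialOrder.lex.toSyn_monotone (a := Finsupp.domCongr e a) (b := Finsupp.domCongr e b) (by intro j; simpa using hab (e.symm j))

lemma permOrder_toSyn_lt {n : ℕ} (e : Fin n ≃ Fin n) {a b : Fin n →₀ ℕ}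
    (h : MonomialOrder.lex.toSyn (Finsupp.domCongr e a)
        < MonomialOrder.lex.toSyn (Finsupp.domCongr e b)) :
    (permOrder e).toSyn a < (permOrder e).toSyn b := h

lemma exists_order_gt {n : ℕ} {t u : Fin n →₀ ℕ} (h : ¬ u ≤ t) :
    ∃ τ : MonomialOrder.{0, 0} (Fin n), τ.toSyn t < τ.toSyn u := by
  obtain ⟨i, hi⟩ : ∃ i, t i < u i := by
    by_contra hc
    push_neg at hc
    exact h (Finsupp.le_def.mpr fun i => hc i)
  obtain _ | n := n
  · exact i.elim0
  refine ⟨permOrder (Equiv.swap 0 i), permOrder_toSyn_lt _ ?_⟩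
  rw [MonomialOrder.lex_lt_iff]
  refine (Finsupp.lex_def (r := (· < ·)) (s := (· < ·))
    (a := (Finsupp.domCongr (Equiv.swap 0 i)) t) (b := (Finsupp.domCongr (Equiv.swap 0 i)) u)).mpr ⟨0, fun j hj => absurd hj (by simp [Fin.lt_def]), ?_⟩
  simpa [Finsupp.domCongr_apply, Finsupp.equivMapDomain_apply, Equiv.symm_swap,
    Equiv.swap_apply_left] using hi

/-! ### Normal forms modulo the ideal -/

lemma exists_normalForm (m : MonomialOrder (Fin n)) (I : Ideal (MvPolynomial (Fin n) K))
    (p : MvPolynomial (Fin n) K) :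
    ∃ r : MvPolynomial (Fin n) K, p - r ∈ I ∧
      ∀ v ∈ r.support, monomial v (1 : K) ∉ leadTermIdeal m I := by
  classical
  suffices H : ∀ s : m.syn, ∀ p : MvPolynomial (Fin n) K,
      (∀ w ∈ p.support, monomial w (1 : K) ∈ leadTermIdeal m I → m.toSyn w ≤ s) →
      ∃ r : MvPolynomial (Fin n) K, p - r ∈ I ∧
        ∀ v ∈ r.support, monomial v (1 : K) ∉ leadTermIdeal m I by
    exact H (p.support.sup fun w => m.toSyn w) p (fun w hw _ => Finset.le_sup hw)
  intro s
  induction s using WellFoundedLT.induction with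
  | _ s IH =>
  intro p hps
  by_cases hbad : ∃ w ∈ p.support, monomial w (1 : K) ∈ leadTermIdeal m I
  · -- reduce the maximal "bad" monomial of p
    set B := p.support.filter (fun w => monomial w (1 : K) ∈ leadTermIdeal m I) with hB
    have hBne : B.Nonempty := by
      obtain ⟨w, hw, hw'⟩ := hbad
      exact ⟨w, Finset.mem_filter.mpr ⟨hw, hw'⟩⟩
    obtain ⟨v, hvB, hv_eq⟩ := Finset.exists_mem_eq_sup B hBne (fun w => m.toSyn w)
    have hvmax : ∀ w ∈ B, m.toSyn w ≤ m.toSyn v := fun w hw => hv_eq ▸ Finset.le_sup hw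
    have hv_supp : v ∈ p.support := (Finset.mem_filter.mp hvB).1
    have hv_lt : monomial v (1 : K) ∈ leadTermIdeal m I := (Finset.mem_filter.mp hvB).2
    obtain ⟨f, hfI, hf0, hle⟩ := (monomial_mem_leadTermIdeal_iff m I).mp hv_lt
    set u := v - leadMonomial m f with hu
    have huv : u + leadMonomial m f = v := by
      rw [hu]; exact tsub_add_cancel_of_le hle
    have hlc0 : f.coeff (leadMonomial m f) ≠ 0 :=
      mem_support_iff.mp (leadMonomial_mem_support m hf0)
    set q := (p.coeff v * (f.coeff (leadMonomial m f))⁻¹) • (monomial u 1 * f) with hq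
    have hqI : q ∈ I := Submodule.smul_of_tower_mem _ _ (I.mul_mem_left _ hfI)
    set p' := p - q with hp'
    have hcoeffq : q.coeff v = p.coeff v := by
      rw [hq, coeff_smul, ← huv, coeff_monomial_mul, one_mul, smul_eq_mul]
      field_simp
    have hv0 : p'.coeff v = 0 := by
      rw [hp', coeff_sub, hcoeffq, sub_self]
    have hq_supp : ∀ w ∈ q.support, w = v ∨ m.toSyn w < m.toSyn v := by
      intro w hw
      have hw1 : w ∈ (monomial u (1 : K) * f).support := support_smul hw
      have hw2 := support_mul _ f hw1
      rw [Finset.mem_add] at hw2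
      obtain ⟨a, ha, w', hw', rfl⟩ := hw2
      have ha' : a = u := by
        have := support_monomial_subset (σ := Fin n) (a := (1 : K)) (s := u) ha
        simpa using this
      subst ha'
      by_cases hweq : w' = leadMonomial m f
      · left; rw [hweq, huv]
      · right
        have h1 : m.toSyn w' < m.toSyn (leadMonomial m f) :=
          lt_of_le_of_ne (le_leadMonomial m hw') (fun hc => hweq (m.toSyn.injective hc))
        calc m.toSyn (u + w') = m.toSyn u + m.toSyn w' := map_add _ _ _
          _ < m.toSyn u + m.toSyn (leadMonomial m f) := by exact add_lt_add_of_le_of_lt le_rfl h1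
          _ = m.toSyn v := by rw [← map_add, huv]
    have hp'bound : ∀ w ∈ p'.support, monomial w (1 : K) ∈ leadTermIdeal m I →
        m.toSyn w < m.toSyn v := by
      intro w hw hwlt
      have hwv : w ≠ v := fun hc => by
        rw [hc] at hw; exact (mem_support_iff.mp hw) hv0
      have : w ∈ p.support ∨ w ∈ q.support := by
        by_contra hc
        push_neg at hc
        have h1 : p.coeff w = 0 := notMem_support_iff.mp hc.1
        have h2 : q.coeff w = 0 := notMem_support_iff.mp hc.2
        exact (mem_support_iff.mp hw) (by rw [hp', coeff_sub, h1, h2, sub_self])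
      rcases this with h | h
      · exact lt_of_le_of_ne (hvmax w (Finset.mem_filter.mpr ⟨h, hwlt⟩))
          (fun hc => hwv (m.toSyn.injective hc))
      · rcases hq_supp w h with rfl | hlt
        · exact absurd rfl hwv
        · exact hlt
    have hsv : m.toSyn v ≤ s := hps v hv_supp hv_lt
    by_cases hbad' : ∃ w ∈ p'.support, monomial w (1 : K) ∈ leadTermIdeal m I
    · set B' := p'.support.filter (fun w => monomial w (1 : K) ∈ leadTermIdeal m I) with hB'
      have hB'ne : B'.Nonempty := by
        obtain ⟨w, hw, hw'⟩ := hbad'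
        exact ⟨w, Finset.mem_filter.mpr ⟨hw, hw'⟩⟩
      obtain ⟨v', hv'B, hv'_eq⟩ := Finset.exists_mem_eq_sup B' hB'ne (fun w => m.toSyn w)
      have hv'v : m.toSyn v' < m.toSyn v :=
        hp'bound v' (Finset.mem_filter.mp hv'B).1 (Finset.mem_filter.mp hv'B).2
      obtain ⟨r, hrI, hrstd⟩ := IH (m.toSyn v') (lt_of_lt_of_le hv'v hsv) p'
        (fun w hw hwlt => hv'_eq ▸ Finset.le_sup (f := fun w => m.toSyn w)
          (Finset.mem_filter.mpr ⟨hw, hwlt⟩))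
      refine ⟨r, ?_, hrstd⟩
      have : p - r = q + (p' - r) := by rw [hp']; ring
      rw [this]
      exact I.add_mem hqI hrI
    · push_neg at hbad'
      refine ⟨p', ?_, hbad'⟩
      have : p - p' = q := by rw [hp']; ring
      rw [this]
      exact hqI
  · push_neg at hbad
    exact ⟨p, by simp [I.zero_mem], hbad⟩

/-! ### The key structural lemma -/

lemma exists_reducer {I : Ideal (MvPolynomial (Fin n) K)}
    (m : MonomialOrder (Fin n))
    (hGF0 : ∀ τ : MonomialOrder.{0, 0} (Fin n), leadTermIdeal τ I = leadTermIdeal m I)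
    {t : Fin n →₀ ℕ}
    (ht : monomial t (1 : K) ∈ leadTermIdeal m I) :
    ∃ N : MvPolynomial (Fin n) K,
      monomial t (1 : K) - N ∈ I ∧
      (∀ v ∈ N.support, monomial v (1 : K) ∉ leadTermIdeal m I) ∧
      (∀ v ∈ N.support, v ≤ t ∧ v ≠ t) := by
  obtain ⟨N, hNI, hNstd⟩ := exists_normalForm m I (monomial t (1 : K))
  have htN : t ∉ N.support := fun h => hNstd t h ht
  refine ⟨N, hNI, hNstd, ?_⟩
  intro v hv
  have hvt : v ≠ t := fun hc => htN (hc ▸ hv)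
  refine ⟨?_, hvt⟩
  by_contra hvle
  obtain ⟨τ, hτ⟩ := exists_order_gt hvle
  set g := monomial t (1 : K) - N with hg
  have hgt : g.coeff t = 1 := by
    rw [hg, coeff_sub, coeff_monomial, if_pos rfl, notMem_support_iff.mp htN, sub_zero]
  have hg0 : g ≠ 0 := fun hc => one_ne_zero (by rw [← hgt, hc, coeff_zero])
  have hgI : g ∈ I := hNI
  have hlmg : monomial (leadMonomial τ g) (1 : K) ∈ leadTermIdeal τ I :=
    Ideal.subset_span ⟨g, hgI, hg0, rfl⟩
  rw [hGF0 τ] at hlmg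
  have hgsub : ∀ w ∈ g.support, w = t ∨ w ∈ N.support := by
    intro w hw
    by_contra hc
    push_neg at hc
    refine (mem_support_iff.mp hw) ?_
    rw [hg, coeff_sub, coeff_monomial, if_neg (fun h => hc.1 h.symm),
      notMem_support_iff.mp hc.2, sub_zero]
  have hlm_t : leadMonomial τ g = t := by
    rcases hgsub _ (leadMonomial_mem_support τ hg0) with h | h
    · exact h
    · exact absurd hlmg (hNstd _ h)
  have hvg : v ∈ g.support := by
    rw [mem_support_iff, hg, coeff_sub, coeff_monomial, if_neg (fun h => hvt h.symm), zero_sub,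
      neg_ne_zero]
    exact mem_support_iff.mp hv
  have := le_leadMonomial τ hvg
  rw [hlm_t] at this
  exact absurd hτ (not_lt.mpr this)

end GFanAux

open GFanAux in
/-- If `I` has GFan number 1, then the complement `O(I)` of its (unique) leading term
ideal is the unique order ideal whose monomial residue classes form a `K`-basis
of `P/I`. -/
theorem unique_basic_set_of_GFanNum_one
    {n : ℕ} {K : Type*} [Field K] (I : Ideal (MvPolynomial (Fin n) K))
    (hGF : ∀ m τ : MonomialOrder (Fin n), leadTermIdeal m I = leadTermIdeal τ I)
    (m : MonomialOrder (Fin n))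
    (O : Set (Fin n →₀ ℕ))
    (hOrd : ∀ t ∈ O, ∀ s : Fin n →₀ ℕ, s ≤ t → s ∈ O)
    (hind : LinearIndependent K fun t : O =>
        Ideal.Quotient.mk I (monomial (t : Fin n →₀ ℕ) (1 : K)))
    (hspan : Submodule.span K
        (Set.range fun t : O =>
          Ideal.Quotient.mk I (monomial (t : Fin n →₀ ℕ) (1 : K))) = ⊤) :
    O = {t : Fin n →₀ ℕ | monomial t (1 : K) ∉ leadTermIdeal m I} := by
  classical
  have hGF0 : ∀ τ : MonomialOrder.{0, 0} (Fin n), leadTermIdeal τ I = leadTermIdeal m I := by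
    intro τ
    have h1 := hGF (reuniv τ) (reuniv m)
    rw [leadTermIdeal_reuniv τ I, leadTermIdeal_reuniv m I] at h1
    exact h1
  set φ := (Ideal.Quotient.mkₐ K I).toLinearMap with hφ
  have hφeq : ∀ x, φ x = Ideal.Quotient.mk I x := fun x => rfl
  have hO1 : ∀ t ∈ O, monomial t (1 : K) ∉ leadTermIdeal m I := by
    intro t htO hlt
    obtain ⟨N, hNI, hNstd, hNle⟩ := exists_reducer m hGF0 hlt
    set g := monomial t (1 : K) - N with hg
    have htN : t ∉ N.support := fun h => (hNle t h).2 rfl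
    have hgt : g.coeff t = 1 := by
      rw [hg, coeff_sub, coeff_monomial, if_pos rfl, notMem_support_iff.mp htN, sub_zero]
    have hgsupp : ∀ w ∈ g.support, w ∈ O := by
      intro w hw
      have hwcase : w = t ∨ w ∈ N.support := by
        by_contra hc
        push_neg at hc
        refine (mem_support_iff.mp hw) ?_
        rw [hg, coeff_sub, coeff_monomial, if_neg (fun h => hc.1 h.symm),
          notMem_support_iff.mp hc.2, sub_zero]
      rcases hwcase with rfl | h
      · exact htO
      · exact hOrd t htO w (hNle w h).1
    set l : (Fin n →₀ ℕ) →₀ K :=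
      Finsupp.onFinset g.support (fun w => g.coeff w) (fun w h => mem_support_iff.mpr h) with hl
    have hlsupp : l ∈ Finsupp.supported K K O := by
      rw [Finsupp.mem_supported]
      intro w hw
      exact hgsupp w (Finsupp.support_onFinset_subset hw)
    have hgsum : g = ∑ w ∈ g.support, (g.coeff w) • monomial w (1 : K) := by
      conv_lhs => rw [← support_sum_monomial_coeff g]
      apply Finset.sum_congr rfl
      intro w _
      rw [smul_monomial, smul_eq_mul, mul_one]
    have hls : (l.sum fun w c => c • Ideal.Quotient.mk I (monomial w (1 : K)))
        = ∑ w ∈ g.support, (g.coeff w) • Ideal.Quotient.mk I (monomial w (1 : K)) :=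
      Finsupp.sum_of_support_subset l Finsupp.support_onFinset_subset _
        (fun i _ => zero_smul _ _)
    have hcomb : Finsupp.linearCombination K
        (fun w : Fin n →₀ ℕ => Ideal.Quotient.mk I (monomial w (1 : K))) l = 0 := by
      rw [Finsupp.linearCombination_apply, hls]
      have : ∑ w ∈ g.support, (g.coeff w) • Ideal.Quotient.mk I (monomial w (1 : K))
          = Ideal.Quotient.mk I g := by
        conv_rhs => rw [← hφeq, hgsum, map_sum]
        apply Finset.sum_congr rfl
        intro w _
        rw [map_smul, hφeq]
      rw [this]
      exact Ideal.Quotient.eq_zero_iff_mem.mpr hNI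
    have hl0 : l = 0 := by
      have hind' : ∀ l ∈ Finsupp.supported K K O, Finsupp.linearCombination K
          (fun w : Fin n →₀ ℕ => Ideal.Quotient.mk I (monomial w (1 : K))) l = 0 → l = 0 :=
        linearIndepOn_iff.mp hind
      exact hind' l hlsupp hcomb
    have h2 : g.coeff t = 0 := by
      have := congrArg (fun f : (Fin n →₀ ℕ) →₀ K => f t) hl0
      simpa [hl] using this
    rw [hgt] at h2
    exact one_ne_zero h2
  have hO2 : ∀ t : Fin n →₀ ℕ, monomial t (1 : K) ∉ leadTermIdeal m I → t ∈ O := by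
    intro t ht
    have hmem : Ideal.Quotient.mk I (monomial t (1 : K)) ∈ Submodule.span K
        (Set.range fun t : O => Ideal.Quotient.mk I (monomial (t : Fin n →₀ ℕ) (1 : K))) := by
      rw [hspan]; exact Submodule.mem_top
    rw [Finsupp.mem_span_range_iff_exists_finsupp] at hmem
    obtain ⟨c, hc⟩ := hmem
    set p := c.sum (fun s a => monomial (s : Fin n →₀ ℕ) a) with hp
    have hpsum : p = ∑ s ∈ c.support, monomial (s : Fin n →₀ ℕ) (c s) := rfl
    have hmkp : Ideal.Quotient.mk I p = Ideal.Quotient.mk I (monomial t (1 : K)) := by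
      rw [← hc, ← hφeq, hpsum, map_sum, Finsupp.sum]
      apply Finset.sum_congr rfl
      intro s _
      rw [hφeq]
      have hmono : monomial (s : Fin n →₀ ℕ) (c s) = (c s) • monomial (s : Fin n →₀ ℕ) (1 : K) := by
        rw [smul_monomial, smul_eq_mul, mul_one]
      rw [hmono, ← hφeq, map_smul, hφeq]
    have hIsub : monomial t (1 : K) - p ∈ I := by
      rw [← Ideal.Quotient.eq]
      exact hmkp.symm
    have hpsupp : ∀ v ∈ p.support, v ∈ O := by
      intro v hv
      have hvne : p.coeff v ≠ 0 := mem_support_iff.mp hv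
      rw [hpsum] at hvne
      have hex : ∃ s ∈ c.support, coeff v (monomial (s : Fin n →₀ ℕ) (c s)) ≠ 0 := by
        by_contra hcon
        push_neg at hcon
        refine hvne ?_
        rw [coeff_sum]
        exact Finset.sum_eq_zero hcon
      obtain ⟨s, _, hs⟩ := hex
      rw [coeff_monomial] at hs
      by_cases hsv : (s : Fin n →₀ ℕ) = v
      · exact hsv ▸ s.2
      · exact absurd (if_neg hsv) hs
    have hstd : ∀ v ∈ (monomial t (1 : K) - p).support,
        monomial v (1 : K) ∉ leadTermIdeal m I := by
      intro v hv
      have hvcase : v = t ∨ v ∈ p.support := by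
        by_contra hcon
        push_neg at hcon
        refine (mem_support_iff.mp hv) ?_
        rw [coeff_sub, coeff_monomial, if_neg (fun h => hcon.1 h.symm),
          notMem_support_iff.mp hcon.2, sub_zero]
      rcases hvcase with rfl | h
      · exact ht
      · exact hO1 v (hpsupp v h)
    have h0 : monomial t (1 : K) - p = 0 := eq_zero_of_support_std m I hIsub hstd
    have hcoefft : p.coeff t = 1 := by
      have := congrArg (coeff t) h0
      rw [coeff_sub, coeff_monomial, if_pos rfl, coeff_zero, sub_eq_zero] at this
      exact this.symm
    exact hpsupp t (mem_support_iff.mpr (by rw [hcoefft]; exact one_ne_zero))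
  ext t
  exact ⟨fun h => hO1 t h, fun h => hO2 t h⟩
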